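/- Let X, V, W, Y be real Banach spaces and D ⊆ X × V. Fix ρ > 0, α > 0, τ > 0, m, o, r ∈ [1,∞), x₀ ∈ X, and define the misfit 𝒮((w,y₁),(w',y₂)) := (ρ/m)‖w − w'‖_W^m + (1/o)‖y₁ − y₂‖_Y^o on (W × Y)², and C_S := max{2^{m−1}, 2^{o−1}}. Let A : X × V → W and C : V → Y be Fréchet differentiable at (x_k,u_k) ∈ D and u_k respectively, and define the linearized all-at-once operator 𝐋(x,u) := (A(x_k,u_k) + A'(x_k,u_k)(x − x_k, u − u_k), C(u_k) + C'(u_k)(u − u_k)). Let (x†,u†) ∈ D satisfy A(x†,u†) = 0 and C(u†) = y, let yδ ∈ Y with ‖y − yδ‖ ≤ δ, δ ≥ 0, and write 𝐅(x,u) := (A(x,u), C(u)). Assume: (i) (x_{k+1},u_{k+1}) minimizes 𝒮(𝐋(x,u),(0,yδ)) + (α/r)‖x − x₀‖^r over D; (ii) the tangential cone estimate 𝒮(𝐋(x†,u†), 𝐅(x†,u†)) ≤ c_tc·𝒮(𝐅(x†,u†), 𝐅(x_k,u_k)) holds with c_tc ≥ 0; (iii) 𝒮(𝐅(x_k,u_k),(0,yδ))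 ≥ τ δ^o/o (the discrepancy principle has not yet been reached); and (iv) 𝒮(𝐋(x_{k+1},u_{k+1}),(0,yδ)) ≥ σ̲·𝒮(𝐅(x_k,u_k),(0,yδ)) for some σ̲ ≥ 0. Then (σ̲ − C_S² c_tc − C_S(1 + C_S c_tc)/τ)·𝒮(𝐅(x_k,u_k),(0,yδ)) + (α/r)‖x_{k+1} − x₀‖^r ≤ (α/r)‖x† − x₀‖^r. In particular, if σ̲ ≥ C_S² c_tc + C_S(1 + C_S c_tc)/τ, then ‖x_{k+1} − x₀‖^r ≤ ‖x† − x₀‖^r. -/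

import Mathlib

private lemma rpow_add_le_aux {a b p : ℝ} (ha : 0 ≤ a) (hb : 0 ≤ b) (hp : 1 ≤ p) :
    (a + b) ^ p ≤ 2 ^ (p - 1) * (a ^ p + b ^ p) := by
  have h := NNReal.rpow_add_le_mul_rpow_add_rpow (NNReal.mk a ha) (NNReal.mk b hb) hp
  have := NNReal.coe_le_coe.mpr h
  push_cast at this
  simpa using this

private lemma norm_rpow_tri {E : Type*} [NormedAddCommGroup E] {x y z : E} {p : ℝ}
    (hp : 1 ≤ p) :
    ‖x - z‖ ^ p ≤ 2 ^ (p - 1) * (‖x - y‖ ^ p + ‖y - z‖ ^ p) := by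
  calc ‖x - z‖ ^ p ≤ (‖x - y‖ + ‖y - z‖) ^ p := by
        apply Real.rpow_le_rpow (norm_nonneg _) _ (le_trans zero_le_one hp)
        simpa using norm_sub_le_norm_sub_add_norm_sub x y z
    _ ≤ _ := rpow_add_le_aux (norm_nonneg _) (norm_nonneg _) hp


/-- One step of the all-at-once IRGNM with regularization of the parameter only
(boundedness estimate (3.8) in Proposition 3.1): if the new iterate minimizes the
linearized misfit plus `(α/r)‖x−x₀‖^r` over `D`, the tangential cone estimate
holds, the discrepancy principle is not yet reached, and the inexact-Newton
lower bound holds, then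
`(σ̲ − C_S²c_tc − C_S(1+C_Sc_tc)/τ)·𝒮(𝐅(x_k,u_k),(0,yδ)) + (α/r)‖x_{k+1}−x₀‖^r
  ≤ (α/r)‖x†−x₀‖^r`;
in particular `‖x_{k+1}−x₀‖^r ≤ ‖x†−x₀‖^r` when `σ̲ ≥ C_S²c_tc + C_S(1+C_Sc_tc)/τ`. -/
theorem allAtOnce_IRGNM_parameter_bound
    {X V W Y : Type*}
    [NormedAddCommGroup X] [NormedSpace ℝ X] [CompleteSpace X]
    [NormedAddCommGroup V] [NormedSpace ℝ V] [CompleteSpace V]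
    [NormedAddCommGroup W] [NormedSpace ℝ W] [CompleteSpace W]
    [NormedAddCommGroup Y] [NormedSpace ℝ Y] [CompleteSpace Y]
    (A : X × V → W) (C : V → Y) (D : Set (X × V))
    (ρ α τ m o r ctc σ CS : ℝ)
    (hρ : 0 < ρ) (hα : 0 < α) (hτ : 0 < τ)
    (hm : 1 ≤ m) (ho : 1 ≤ o) (hr : 1 ≤ r) (hctc : 0 ≤ ctc) (hσ : 0 ≤ σ)
    (hCS : CS = max ((2 : ℝ) ^ (m - 1)) ((2 : ℝ) ^ (o - 1)))
    (x₀ : X)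
    (S : (W × Y) → (W × Y) → ℝ)
    (hS : ∀ p q' : W × Y,
      S p q' = ρ / m * ‖p.1 - q'.1‖ ^ m + 1 / o * ‖p.2 - q'.2‖ ^ o)
    (xk : X) (uk : V) (hkD : (xk, uk) ∈ D)
    (A' : X × V →L[ℝ] W) (C' : V →L[ℝ] Y)
    (hA' : HasFDerivAt A A' (xk, uk)) (hC' : HasFDerivAt C C' uk)
    (Lop : X × V → W × Y)
    (hLop : ∀ p : X × V,
      Lop p = (A (xk, uk) + A' (p.1 - xk, p.2 - uk), C uk + C' (p.2 - uk)))
    (F : X × V → W × Y) (hF : ∀ p : X × V, F p = (A p, C p.2))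
    (xdag : X) (udag : V) (hdagD : (xdag, udag) ∈ D)
    (hAdag : A (xdag, udag) = 0) (y : Y) (hCdag : C udag = y)
    (yδ : Y) (δ : ℝ) (hδ : 0 ≤ δ) (hnoise : ‖y - yδ‖ ≤ δ)
    (xk1 : X) (uk1 : V) (hk1D : (xk1, uk1) ∈ D)
    (hmin : ∀ p ∈ D,
      S (Lop (xk1, uk1)) ((0 : W), yδ) + α / r * ‖xk1 - x₀‖ ^ r
        ≤ S (Lop p) ((0 : W), yδ) + α / r * ‖p.1 - x₀‖ ^ r)
    (htc : S (Lop (xdag, udag)) (F (xdag, udag))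
        ≤ ctc * S (F (xdag, udag)) (F (xk, uk)))
    (hdisc : τ * δ ^ o / o ≤ S (F (xk, uk)) ((0 : W), yδ))
    (hsigma : σ * S (F (xk, uk)) ((0 : W), yδ)
        ≤ S (Lop (xk1, uk1)) ((0 : W), yδ)) :
    (σ - CS ^ 2 * ctc - CS * (1 + CS * ctc) / τ) * S (F (xk, uk)) ((0 : W), yδ)
        + α / r * ‖xk1 - x₀‖ ^ r
      ≤ α / r * ‖xdag - x₀‖ ^ r ∧
    (CS ^ 2 * ctc + CS * (1 + CS * ctc) / τ ≤ σ →
      ‖xk1 - x₀‖ ^ r ≤ ‖xdag - x₀‖ ^ r) :=  by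
  -- basic positivity facts
  have hm0 : (0:ℝ) < m := lt_of_lt_of_le one_pos hm
  have ho0 : (0:ℝ) < o := lt_of_lt_of_le one_pos ho
  have hr0 : (0:ℝ) < r := lt_of_lt_of_le one_pos hr
  have hCS1 : (1:ℝ) ≤ CS := by
    rw [hCS]
    exact le_trans (by
      calc (1:ℝ) = 2 ^ (0:ℝ) := by norm_num
        _ ≤ 2 ^ (m-1) := Real.rpow_le_rpow_of_exponent_le one_le_two (by linarith)) (le_max_left _ _)
  have hCS0 : (0:ℝ) ≤ CS := le_trans zero_le_one hCS1
  have hSnn : ∀ p q : W × Y, 0 ≤ S p q := by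
    intro p q
    rw [hS]
    have h1 : (0:ℝ) ≤ ρ / m * ‖p.1 - q.1‖ ^ m :=
      mul_nonneg (div_nonneg hρ.le hm0.le) (Real.rpow_nonneg (norm_nonneg _) _)
    have h2 : (0:ℝ) ≤ 1 / o * ‖p.2 - q.2‖ ^ o :=
      mul_nonneg (by positivity) (Real.rpow_nonneg (norm_nonneg _) _)
    linarith
  have hSsymm : ∀ p q : W × Y, S p q = S q p := by
    intro p q; rw [hS, hS, norm_sub_rev, norm_sub_rev p.2]
  -- quasi-triangle inequality
  have hStri : ∀ p q s : W × Y, S p s ≤ CS * (S p q + S q s) := by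
    intro p q s
    rw [hS, hS, hS]
    have hcm : (2:ℝ) ^ (m-1) ≤ CS := hCS ▸ le_max_left _ _
    have hco : (2:ℝ) ^ (o-1) ≤ CS := hCS ▸ le_max_right _ _
    have h1 : ‖p.1 - s.1‖ ^ m ≤ 2 ^ (m-1) * (‖p.1 - q.1‖ ^ m + ‖q.1 - s.1‖ ^ m) :=
      norm_rpow_tri hm
    have h2 : ‖p.2 - s.2‖ ^ o ≤ 2 ^ (o-1) * (‖p.2 - q.2‖ ^ o + ‖q.2 - s.2‖ ^ o) :=
      norm_rpow_tri ho
    have a1 : (0:ℝ) ≤ ‖p.1 - q.1‖ ^ m := Real.rpow_nonneg (norm_nonneg _) _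
    have a2 : (0:ℝ) ≤ ‖q.1 - s.1‖ ^ m := Real.rpow_nonneg (norm_nonneg _) _
    have b1 : (0:ℝ) ≤ ‖p.2 - q.2‖ ^ o := Real.rpow_nonneg (norm_nonneg _) _
    have b2 : (0:ℝ) ≤ ‖q.2 - s.2‖ ^ o := Real.rpow_nonneg (norm_nonneg _) _
    have hdm : (0:ℝ) ≤ ρ / m := div_nonneg hρ.le hm0.le
    have hdo : (0:ℝ) ≤ 1 / o := by positivity
    nlinarith [mul_le_mul_of_nonneg_left h1 hdm, mul_le_mul_of_nonneg_left h2 hdo,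
      mul_le_mul_of_nonneg_right hcm (by positivity : (0:ℝ) ≤ ρ/m * (‖p.1-q.1‖^m + ‖q.1-s.1‖^m)),
      mul_le_mul_of_nonneg_right hco (by positivity : (0:ℝ) ≤ 1/o * (‖p.2-q.2‖^o + ‖q.2-s.2‖^o))]
  set d := S (F (xk, uk)) ((0:W), yδ) with hd
  have hd0 : 0 ≤ d := hSnn _ _
  -- F at the exact solution
  have hFdag : F (xdag, udag) = ((0:W), y) := by rw [hF]; simp [hAdag, hCdag]
  -- noise bound : S(F†,(0,yδ)) ≤ d/τ
  have hnoiseS : S (F (xdag, udag)) ((0:W), yδ) ≤ d / τ := by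
    have h1 : S (F (xdag, udag)) ((0:W), yδ) = 1 / o * ‖y - yδ‖ ^ o := by
      rw [hFdag, hS]
      simp [Real.zero_rpow (ne_of_gt ho0), Real.zero_rpow (ne_of_gt hm0)]
    have h2 : ‖y - yδ‖ ^ o ≤ δ ^ o := Real.rpow_le_rpow (norm_nonneg _) hnoise ho0.le
    have h3 : 1 / o * δ ^ o ≤ d / τ := by
      rw [le_div_iff₀ hτ]
      calc 1 / o * δ ^ o * τ = τ * δ ^ o / o := by ring
        _ ≤ d := hdisc
    have h4 : 1 / o * ‖y - yδ‖ ^ o ≤ 1 / o * δ ^ o :=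
      mul_le_mul_of_nonneg_left h2 (by positivity)
    linarith [h1 ▸ le_trans h4 h3]
  -- triangle: S(F†, F_k) ≤ CS*(d/τ + d)
  have hFtri : S (F (xdag, udag)) (F (xk, uk)) ≤ CS * (d / τ + d) := by
    have := hStri (F (xdag, udag)) ((0:W), yδ) (F (xk, uk))
    have hsym : S ((0:W), yδ) (F (xk, uk)) = d := by rw [hSsymm]
    calc S (F (xdag, udag)) (F (xk, uk))
        ≤ CS * (S (F (xdag, udag)) ((0:W), yδ) + S ((0:W), yδ) (F (xk, uk))) := this
      _ ≤ CS * (d / τ + d) := by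
          apply mul_le_mul_of_nonneg_left _ hCS0
          rw [hsym]
          linarith [hnoiseS]
  -- bound on S(L†,(0,yδ))
  have hLdag : S (Lop (xdag, udag)) ((0:W), yδ) ≤ CS * ctc * (CS * (d/τ + d)) + CS * (d/τ) := by
    have h1 : S (Lop (xdag, udag)) ((0:W), yδ)
        ≤ CS * (S (Lop (xdag, udag)) (F (xdag, udag)) + S (F (xdag, udag)) ((0:W), yδ)) :=
      hStri _ _ _
    have h2 : S (Lop (xdag, udag)) (F (xdag, udag)) ≤ ctc * (CS * (d/τ + d)) :=
      le_trans htc (mul_le_mul_of_nonneg_left hFtri hctc)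
    nlinarith [hnoiseS, hCS0]
  -- min + sigma
  have hchain : σ * d + α / r * ‖xk1 - x₀‖ ^ r
      ≤ CS * ctc * (CS * (d/τ + d)) + CS * (d/τ) + α / r * ‖xdag - x₀‖ ^ r := by
    have := hmin (xdag, udag) hdagD
    linarith [hsigma, hLdag]
  have key : (CS ^ 2 * ctc + CS * (1 + CS * ctc) / τ) * d
      = CS * ctc * (CS * (d/τ + d)) + CS * (d/τ) := by ring
  have expand : (σ - CS ^ 2 * ctc - CS * (1 + CS * ctc) / τ) * d
      = σ * d - (CS ^ 2 * ctc + CS * (1 + CS * ctc) / τ) * d := by ring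
  constructor
  · linarith [hchain, key, expand]
  · intro hσ2
    have hcoef : 0 ≤ (σ - CS ^ 2 * ctc - CS * (1 + CS * ctc) / τ) := by linarith
    have h1 : α / r * ‖xk1 - x₀‖ ^ r ≤ α / r * ‖xdag - x₀‖ ^ r := by
      linarith [hchain, key, expand, mul_nonneg hcoef hd0]
    have hαr : (0:ℝ) < α / r := by positivity
    exact le_of_mul_le_mul_left (by linarith) hαr
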